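/- For every odd integer n ≥ 3, the helm graph H_{1,n} satisfies ζ(H_{1,n}) = 3n(n − 1)/2 (in particular ζ(H_{1,3}) = 9); this is the value obtained from the balanced 4-partition of the 2n + 1 vertices into three color classes of size (n+1)/2 and one of size (n−1)/2, minus the 3n edges of H_{1,n}. -/

import Mathlib

open SimpleGraph

/-- A proper vertex colouring of `G` using exactly `χ(G)` colours. -/
def IsChromaticColoring {V : Type*} (G : SimpleGraph V) (c : V → ℕ) : Prop :=
  (∀ u v, G.Adj u v → c u ≠ c v) ∧ ((Set.range c).ncard : ℕ∞) = G.chromaticNumber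

/-- The set of chromatic completion edges for a colouring `c`: unordered pairs of
distinct non-adjacent vertices with different colours. -/
def completionEdges {V : Type*} (G : SimpleGraph V) (c : V → ℕ) : Set (Sym2 V) :=
  {e | ∃ u v, e = s(u, v) ∧ u ≠ v ∧ ¬ G.Adj u v ∧ c u ≠ c v}

/-- The chromatic completion number `ζ(G)`. -/
noncomputable def zeta {V : Type*} (G : SimpleGraph V) : ℕ :=
  sSup {m | ∃ c : V → ℕ, IsChromaticColoring G c ∧ m = (completionEdges G c).ncard}

/-- The wheel graph `W_{1,n}`: the cycle `C_n` (on the `some` vertices) joined to a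
central hub vertex `none` adjacent to every rim vertex. -/
def wheelGraph (n : ℕ) : SimpleGraph (Option (Fin n)) where
  Adj u v := match u, v with
    | none, none => False
    | none, some _ => True
    | some _, none => True
    | some i, some j => (cycleGraph n).Adj i j
  symm := by
    constructor
    intro u v h
    cases u <;> cases v <;> simp_all
    exact ((cycleGraph n).adj_symm h)
  loopless := by
    constructor
    intro u h
    cases u with
    | none => exact h
    | some i => exact (cycleGraph n).loopless.irrefl i h

/-- The helm graph `H_{1,n}`: the wheel `W_{1,n}` (on the `inl` vertices) with a pendant
vertex `inr i` attached to the rim vertex `inl (some i)` for each `i`. -/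
def helmGraph (n : ℕ) : SimpleGraph (Option (Fin n) ⊕ Fin n) where
  Adj u v := match u, v with
    | Sum.inl a, Sum.inl b => (wheelGraph n).Adj a b
    | Sum.inl a, Sum.inr j => a = some j
    | Sum.inr i, Sum.inl b => b = some i
    | Sum.inr _, Sum.inr _ => False
  symm := by
    constructor
    intro u v h
    cases u <;> cases v <;> simp_all
    exact (wheelGraph n).adj_symm h
  loopless := by
    constructor
    intro u h
    cases u with
    | inl a => exact (wheelGraph n).loopless.irrefl a h
    | inr i => exact h


open Finset in
section
variable {V : Type*}

/-- graph of same-colored pairs -/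
private def sameGraph (c : V → ℕ) : SimpleGraph V where
  Adj u v := u ≠ v ∧ c u = c v
  symm := ⟨fun u v h => ⟨h.1.symm, h.2.symm⟩⟩
  loopless := ⟨fun u h => h.1 rfl⟩

private def diffGraph (G : SimpleGraph V) (c : V → ℕ) : SimpleGraph V where
  Adj u v := u ≠ v ∧ ¬ G.Adj u v ∧ c u ≠ c v
  symm := ⟨fun u v h => ⟨h.1.symm, fun h' => h.2.1 h'.symm, h.2.2.symm⟩⟩
  loopless := ⟨fun u h => h.1 rfl⟩

private lemma completionEdges_eq (G : SimpleGraph V) (c : V → ℕ) :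
    completionEdges G c = (diffGraph G c).edgeSet := by
  ext e
  induction e with
  | _ u v =>
    constructor
    · rintro ⟨a, b, he, h1, h2, h3⟩
      rw [he]
      rw [SimpleGraph.mem_edgeSet]
      exact ⟨h1, h2, h3⟩
    · intro h
      rw [SimpleGraph.mem_edgeSet] at h
      obtain ⟨h1, h2, h3⟩ := h
      exact ⟨u, v, rfl, h1, h2, h3⟩

private lemma master {V : Type*} [Fintype V] (G : SimpleGraph V) (c : V → ℕ)
    (hc : ∀ u v, G.Adj u v → c u ≠ c v) :
    (completionEdges G c).ncard + (sameGraph c).edgeSet.ncard + G.edgeSet.ncard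
      = (Fintype.card V).choose 2 := by
  classical
  rw [completionEdges_eq]
  have hsup : diffGraph G c ⊔ sameGraph c ⊔ G = ⊤ := by
    ext u v
    simp only [SimpleGraph.sup_adj, SimpleGraph.top_adj, diffGraph, sameGraph]
    constructor
    · rintro ((⟨h,_⟩|⟨h,_⟩)|h); exact h; exact h; exact h.ne
    · intro hne
      by_cases hadj : G.Adj u v
      · exact Or.inr hadj
      · by_cases hcc : c u = c v
        · exact Or.inl (Or.inr ⟨hne, hcc⟩)
        · exact Or.inl (Or.inl ⟨hne, hadj, hcc⟩)
  have hd1 : Disjoint (diffGraph G c) (sameGraph c) := by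
    rw [disjoint_iff]
    ext u v
    simp only [SimpleGraph.inf_adj, SimpleGraph.bot_adj, diffGraph, sameGraph]
    tauto
  have hd2 : Disjoint (diffGraph G c ⊔ sameGraph c) G := by
    rw [disjoint_iff]
    ext u v
    simp only [SimpleGraph.sup_adj, SimpleGraph.inf_adj, SimpleGraph.bot_adj, diffGraph, sameGraph]
    constructor
    · rintro ⟨(⟨_,h,_⟩|⟨_,hcc⟩), hadj⟩
      · exact h hadj
      · exact hc u v hadj hcc
    · exact False.elim
  have hfin : ∀ (H : SimpleGraph V), H.edgeSet.Finite := fun H => Set.toFinite _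
  have htop : ((⊤ : SimpleGraph V).edgeSet).ncard = (Fintype.card V).choose 2 := by
    rw [Set.ncard_eq_toFinset_card']
    simpa [SimpleGraph.edgeFinset] using
      SimpleGraph.card_edgeFinset_top_eq_card_choose_two (V := V)
  calc (diffGraph G c).edgeSet.ncard + (sameGraph c).edgeSet.ncard + G.edgeSet.ncard
      = ((diffGraph G c).edgeSet ∪ (sameGraph c).edgeSet).ncard + G.edgeSet.ncard := by
        rw [Set.ncard_union_eq (by rw [SimpleGraph.disjoint_edgeSet]; exact hd1) (hfin _) (hfin _)]
    _ = (((diffGraph G c) ⊔ (sameGraph c)).edgeSet ∪ G.edgeSet).ncard := by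
        rw [← SimpleGraph.edgeSet_sup,
          Set.ncard_union_eq (by rw [SimpleGraph.disjoint_edgeSet]; exact hd2) (hfin _) (hfin _),
          SimpleGraph.edgeSet_sup]
    _ = (Fintype.card V).choose 2 := by
        rw [← SimpleGraph.edgeSet_sup, hsup, htop]

end

open Finset in
private lemma same_count {V : Type*} [Fintype V] [DecidableEq V] (c : V → ℕ) :
    2 * (sameGraph c).edgeSet.ncard + Fintype.card V
      = ∑ k ∈ Finset.univ.image c, (#(Finset.filter (fun v => c v = k) (Finset.univ : Finset V)))^2 := by
  letI hdec : DecidableRel (sameGraph c).Adj := fun u v => instDecidableAnd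
  have hcard : (sameGraph c).edgeSet.ncard = #(sameGraph c).edgeFinset := by
    rw [Set.ncard_eq_toFinset_card']
    congr 1
  rw [hcard, ← SimpleGraph.sum_degrees_eq_twice_card_edges (G := sameGraph c)]
  have hdeg : ∀ v, (sameGraph c).degree v + 1 = #(Finset.filter (fun w => c w = c v) (Finset.univ : Finset V)) := by
    intro v
    rw [SimpleGraph.degree, SimpleGraph.neighborFinset_eq_filter]
    have : (Finset.filter (fun w => (sameGraph c).Adj v w) (Finset.univ : Finset V)) = (Finset.filter (fun w => c w = c v) (Finset.univ : Finset V)).erase v := by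
      ext w
      rw [mem_filter, mem_erase, mem_filter]
      simp only [mem_univ, true_and, sameGraph, ne_eq]
      constructor
      · rintro ⟨h1, h2⟩; exact ⟨fun h => h1 h.symm, h2.symm⟩
      · rintro ⟨h1, h2⟩; exact ⟨fun h => h1 h.symm, h2.symm⟩
    rw [this, card_erase_of_mem (by simp)]
    have : 1 ≤ #(Finset.filter (fun w => c w = c v) (Finset.univ : Finset V)) := card_pos.2 ⟨v, by simp⟩
    omega
  have h1 : ∑ v : V, ((sameGraph c).degree v + 1) = ∑ v : V, #(Finset.filter (fun w => c w = c v) (Finset.univ : Finset V)) :=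
    Finset.sum_congr rfl fun v _ => hdeg v
  rw [Finset.sum_add_distrib, Finset.sum_const, card_univ, smul_eq_mul, mul_one] at h1
  rw [h1]
  rw [Finset.sum_comp (fun k => #(Finset.filter (fun w => c w = k) (Finset.univ : Finset V))) c]
  refine Finset.sum_congr rfl fun k _ => ?_
  rw [smul_eq_mul, sq]

open Finset in
private lemma four_color_bound {V : Type*} [Fintype V] [DecidableEq V] (c : V → ℕ)
    (h4 : #(Finset.univ.image c) = 4) :
    (Fintype.card V)^2 ≤ 4 * (2 * (sameGraph c).edgeSet.ncard + Fintype.card V) := by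
  classical
  rw [same_count]
  have hsum : ∑ k ∈ Finset.univ.image c, #(Finset.filter (fun v => c v = k) (Finset.univ : Finset V)) = Fintype.card V := by
    rw [← card_univ]
    exact (Finset.card_eq_sum_card_fiberwise (fun v _ => Finset.mem_image_of_mem c (mem_univ v))).symm
  calc (Fintype.card V)^2
      = (∑ k ∈ Finset.univ.image c, #(Finset.filter (fun v => c v = k) (Finset.univ : Finset V)))^2 := by rw [hsum]
    _ ≤ #(Finset.univ.image c) * ∑ k ∈ Finset.univ.image c, (#(Finset.filter (fun v => c v = k) (Finset.univ : Finset V)))^2 :=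
        sq_sum_le_card_mul_sum_sq
    _ = 4 * ∑ k ∈ Finset.univ.image c, (#(Finset.filter (fun v => c v = k) (Finset.univ : Finset V)))^2 := by rw [h4]

private lemma fin_sub_val {n : ℕ} (a b : Fin n) :
    ((a - b : Fin n) : ℕ) = if b.val ≤ a.val then a.val - b.val else a.val + n - b.val := by
  have ha := a.isLt
  have hb := b.isLt
  rw [Fin.sub_def]
  simp only
  rcases le_or_gt b.val a.val with h | h
  · rw [if_pos h, Nat.mod_eq_sub_mod (by omega), show n - ↑b + ↑a - n = ↑a - ↑b by omega,
      Nat.mod_eq_of_lt (by omega)]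
  · rw [if_neg (by omega), Nat.mod_eq_of_lt (by omega)]
    omega

private lemma cycle_adj {n : ℕ} (hn : 3 ≤ n) (u v : Fin n) :
    (cycleGraph n).Adj u v ↔
      (u.val + 1 = v.val ∨ v.val + 1 = u.val ∨ (u.val = 0 ∧ v.val = n - 1) ∨
        (v.val = 0 ∧ u.val = n - 1)) := by
  have hu := u.isLt
  have hv := v.isLt
  rw [cycleGraph_adj', fin_sub_val, fin_sub_val]
  split_ifs <;> omega

open Finset in
private lemma helm_edge_count {n : ℕ} (hn : 3 ≤ n) : (helmGraph n).edgeSet.ncard = 3 * n := by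
  obtain ⟨k, rfl⟩ : ∃ k, n = k + 3 := ⟨n - 3, by omega⟩
  classical
  have hcard : (helmGraph (k+3)).edgeSet.ncard = #(helmGraph (k+3)).edgeFinset :=
    Set.ncard_eq_toFinset_card' _
  have hsum := SimpleGraph.sum_degrees_eq_twice_card_edges (helmGraph (k+3))
  have hhub : (helmGraph (k+3)).degree (Sum.inl none) = k + 3 := by
    rw [SimpleGraph.degree]
    have : (helmGraph (k+3)).neighborFinset (Sum.inl none)
        = Finset.univ.image (fun i : Fin (k+3) => (Sum.inl (some i) : Option (Fin (k+3)) ⊕ Fin (k+3))) := by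
      ext w
      rcases w with (_ | j) | j <;>
        rw [SimpleGraph.mem_neighborFinset] <;> simp [SimpleGraph.mem_neighborFinset, helmGraph, wheelGraph]
    rw [this, Finset.card_image_of_injective _ (fun a b h => by simpa using h), card_univ,
      Fintype.card_fin]
  have hrim : ∀ i : Fin (k+3), (helmGraph (k+3)).degree (Sum.inl (some i)) = 4 := by
    intro i
    rw [SimpleGraph.degree]
    have : (helmGraph (k+3)).neighborFinset (Sum.inl (some i))
        = ((cycleGraph (k+3)).neighborFinset i).image
            (fun j : Fin (k+3) => (Sum.inl (some j) : Option (Fin (k+3)) ⊕ Fin (k+3)))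
          ∪ ({Sum.inl none, Sum.inr i} : Finset (Option (Fin (k+3)) ⊕ Fin (k+3))) := by
      ext w
      rcases w with (_ | j) | j <;>
        rw [SimpleGraph.mem_neighborFinset] <;> simp [SimpleGraph.mem_neighborFinset, helmGraph, wheelGraph, SimpleGraph.adj_comm, eq_comm]
    rw [this, Finset.card_union_of_disjoint (by simp), 
      Finset.card_image_of_injective _ (fun a b h => by simpa using h)]
    have h2 : #(({Sum.inl none, Sum.inr i} : Finset (Option (Fin (k+3)) ⊕ Fin (k+3)))) = 2 := by
      rw [Finset.card_pair (by simp)]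
    rw [h2]
    have := cycleGraph_degree_three_le (n := k) (v := i)
    rw [SimpleGraph.degree] at this
    rw [this]
  have hpend : ∀ i : Fin (k+3), (helmGraph (k+3)).degree (Sum.inr i) = 1 := by
    intro i
    rw [SimpleGraph.degree]
    have : (helmGraph (k+3)).neighborFinset (Sum.inr i)
        = {(Sum.inl (some i) : Option (Fin (k+3)) ⊕ Fin (k+3))} := by
      ext w
      rcases w with (_ | j) | j <;>
        rw [SimpleGraph.mem_neighborFinset] <;> simp [SimpleGraph.mem_neighborFinset, helmGraph, wheelGraph, eq_comm]
    rw [this, Finset.card_singleton]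
  rw [Fintype.sum_sum_type] at hsum
  rw [Fintype.sum_option] at hsum
  simp only [hhub, hrim, hpend, Finset.sum_const, card_univ, Fintype.card_fin, smul_eq_mul] at hsum
  omega

/-- The optimal chromatic colouring of the helm graph. -/
private def col (n : ℕ) : Option (Fin n) ⊕ Fin n → ℕ
  | Sum.inl none => 3
  | Sum.inl (some i) => if i.val = n - 1 then 2 else i.val % 2
  | Sum.inr i =>
      if i.val = 0 then 1 else if i.val = n - 1 then 0 else if i.val ≤ n / 2 then 2 else 3

private lemma col_lt (n : ℕ) (v : Option (Fin n) ⊕ Fin n) : col n v < 4 := by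
  rcases v with (_ | i) | i <;> simp only [col]
  · omega
  · split_ifs <;> omega
  · split_ifs <;> omega

private lemma col_proper {n : ℕ} (hn : 3 ≤ n) :
    ∀ u v, (helmGraph n).Adj u v → col n u ≠ col n v := by
  have key : ∀ i j : Fin n, (cycleGraph n).Adj i j →
      (if i.val = n - 1 then 2 else i.val % 2) ≠ (if j.val = n - 1 then 2 else j.val % 2) := by
    intro i j hadj
    rw [cycle_adj hn] at hadj
    have hi := i.isLt
    have hj := j.isLt
    split_ifs <;> omega
  have keyp : ∀ i : Fin n, (if i.val = n - 1 then 2 else i.val % 2) ≠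
      (if i.val = 0 then 1 else if i.val = n - 1 then 0 else if i.val ≤ n / 2 then 2 else 3) := by
    intro i
    have hi := i.isLt
    split_ifs <;> omega
  rintro ((_ | i) | i) ((_ | j) | j) hadj
  · exact absurd hadj (by simp [helmGraph, wheelGraph])
  · have hj := j.isLt
    simp only [col]
    split_ifs <;> omega
  · exact absurd hadj (by simp [helmGraph, wheelGraph])
  · have hi := i.isLt
    simp only [col]
    split_ifs <;> omega
  · exact key i j hadj
  · have hij : i = j := by
      have : (some i : Option (Fin n)) = some j := hadj
      simpa using this
    subst hij
    exact keyp i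
  · exact absurd hadj (by simp [helmGraph, wheelGraph])
  · have hij : j = i := by
      have : (some j : Option (Fin n)) = some i := hadj
      simpa using this
    subst hij
    exact (keyp j).symm
  · exact absurd hadj (by simp [helmGraph])

private lemma col_range {n : ℕ} (hn : 3 ≤ n) : Set.range (col n) = {0, 1, 2, 3} := by
  ext x
  simp only [Set.mem_range, Set.mem_insert_iff, Set.mem_singleton_iff]
  constructor
  · rintro ⟨v, rfl⟩
    have := col_lt n v
    omega
  · have h0 : (0 : ℕ) < n := by omega
    have h1 : (1 : ℕ) < n := by omega
    have hn1 : n - 1 < n := by omega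
    rintro (rfl | rfl | rfl | rfl)
    · exact ⟨Sum.inl (some ⟨0, h0⟩), by simp [col]; omega⟩
    · exact ⟨Sum.inl (some ⟨1, h1⟩), by simp [col]; omega⟩
    · exact ⟨Sum.inl (some ⟨n - 1, hn1⟩), by simp [col]⟩
    · exact ⟨Sum.inl none, rfl⟩

open Finset in
private lemma fiber_card {n : ℕ} (k : ℕ) :
    #(Finset.univ.filter (fun v => col n v = k))
      = (if (3 : ℕ) = k then 1 else 0)
        + #((Finset.range n).filter (fun i => (if i = n - 1 then 2 else i % 2) = k))
        + #((Finset.range n).filter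
            (fun i =>
              (if i = 0 then 1 else if i = n - 1 then 0 else if i ≤ n / 2 then 2 else 3) = k)) := by
  rw [Finset.card_filter, Fintype.sum_sum_type, Fintype.sum_option]
  have h1 : ∑ i : Fin n, (if col n (Sum.inl (some i)) = k then 1 else 0)
      = #((Finset.range n).filter (fun i => (if i = n - 1 then 2 else i % 2) = k)) := by
    rw [Finset.card_filter]
    rw [← Fin.sum_univ_eq_sum_range (fun i => if (if i = n - 1 then 2 else i % 2) = k then 1 else 0) n]
    rfl
  have h2 : ∑ i : Fin n, (if col n (Sum.inr i) = k then 1 else 0)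
      = #((Finset.range n).filter
          (fun i => (if i = 0 then 1 else if i = n - 1 then 0 else if i ≤ n / 2 then 2 else 3) = k)) := by
    rw [Finset.card_filter]
    rw [← Fin.sum_univ_eq_sum_range
      (fun i => if (if i = 0 then 1 else if i = n - 1 then 0 else if i ≤ n / 2 then 2 else 3) = k
        then 1 else 0) n]
    rfl
  rw [h1, h2]
  rfl

open Finset in
private lemma rim_count_even (m : ℕ) :
    #((Finset.range (2*m+1)).filter (fun i => (if i = 2*m then 2 else i % 2) = 0)) = m := by
  have he : ((Finset.range (2*m+1)).filter (fun i => (if i = 2*m then 2 else i % 2) = 0))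
      = (Finset.range m).image (fun j => 2*j) := by
    ext i
    simp only [mem_filter, mem_range, mem_image]
    constructor
    · rintro ⟨hi, hp⟩
      rcases eq_or_ne i (2*m) with rfl | hne
      · rw [if_pos rfl] at hp; omega
      · rw [if_neg hne] at hp
        exact ⟨i / 2, by omega, by omega⟩
    · rintro ⟨j, hj, rfl⟩
      rw [if_neg (by omega)]
      omega
  rw [he, Finset.card_image_of_injective _ (fun a b h => by omega), Finset.card_range]

open Finset in
private lemma rim_count_odd (m : ℕ) :
    #((Finset.range (2*m+1)).filter (fun i => (if i = 2*m then 2 else i % 2) = 1)) = m := by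
  have he : ((Finset.range (2*m+1)).filter (fun i => (if i = 2*m then 2 else i % 2) = 1))
      = (Finset.range m).image (fun j => 2*j+1) := by
    ext i
    simp only [mem_filter, mem_range, mem_image]
    constructor
    · rintro ⟨hi, hp⟩
      rcases eq_or_ne i (2*m) with rfl | hne
      · rw [if_pos rfl] at hp; omega
      · rw [if_neg hne] at hp
        exact ⟨i / 2, by omega, by omega⟩
    · rintro ⟨j, hj, rfl⟩
      rw [if_neg (by omega)]
      omega
  rw [he, Finset.card_image_of_injective _ (fun a b h => by omega), Finset.card_range]

open Finset in
private lemma rim_count_two (m : ℕ) :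
    #((Finset.range (2*m+1)).filter (fun i => (if i = 2*m then 2 else i % 2) = 2)) = 1 := by
  have he : ((Finset.range (2*m+1)).filter (fun i => (if i = 2*m then 2 else i % 2) = 2))
      = {2*m} := by
    ext i
    simp only [mem_filter, mem_range, mem_singleton]
    constructor
    · rintro ⟨hi, hp⟩
      rcases eq_or_ne i (2*m) with rfl | hne
      · rfl
      · rw [if_neg hne] at hp; omega
    · rintro rfl
      exact ⟨by omega, by rw [if_pos rfl]⟩
  rw [he, Finset.card_singleton]

open Finset in
private lemma rim_count_three (m : ℕ) :
    #((Finset.range (2*m+1)).filter (fun i => (if i = 2*m then 2 else i % 2) = 3)) = 0 := by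
  rw [Finset.card_eq_zero, Finset.filter_eq_empty_iff]
  intro i _
  split_ifs <;> omega

open Finset in
private lemma pend_count (m : ℕ) (hm : 1 ≤ m) (k : ℕ) :
    #((Finset.range (2*m+1)).filter
        (fun i => (if i = 0 then 1 else if i = 2*m then 0 else if i ≤ m then 2 else 3) = k))
      = if k = 0 then 1 else if k = 1 then 1 else if k = 2 then m else if k = 3 then m - 1 else 0 := by
  have hmem : ∀ i, i ∈ Finset.range (2*m+1) ↔ i < 2*m+1 := fun i => Finset.mem_range
  rcases eq_or_ne k 0 with rfl | h0
  · have he : ((Finset.range (2*m+1)).filter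
        (fun i => (if i = 0 then 1 else if i = 2*m then 0 else if i ≤ m then 2 else 3) = 0)) = {2*m} := by
      ext i
      simp only [mem_filter, mem_range, mem_singleton]
      constructor
      · rintro ⟨hi, hp⟩
        split_ifs at hp <;> omega
      · rintro rfl
        refine ⟨by omega, ?_⟩
        rw [if_neg (by omega), if_pos rfl]
    rw [he, Finset.card_singleton, if_pos rfl]
  rcases eq_or_ne k 1 with rfl | h1
  · have he : ((Finset.range (2*m+1)).filter
        (fun i => (if i = 0 then 1 else if i = 2*m then 0 else if i ≤ m then 2 else 3) = 1)) = {0} := by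
      ext i
      simp only [mem_filter, mem_range, mem_singleton]
      constructor
      · rintro ⟨hi, hp⟩
        split_ifs at hp <;> omega
      · rintro rfl
        exact ⟨by omega, by rw [if_pos rfl]⟩
    rw [he, Finset.card_singleton, if_neg h0, if_pos rfl]
  rcases eq_or_ne k 2 with rfl | h2
  · have he : ((Finset.range (2*m+1)).filter
        (fun i => (if i = 0 then 1 else if i = 2*m then 0 else if i ≤ m then 2 else 3) = 2))
        = Finset.Icc 1 m := by
      ext i
      simp only [mem_filter, mem_range, Finset.mem_Icc]
      constructor
      · rintro ⟨hi, hp⟩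
        split_ifs at hp <;> omega
      · rintro ⟨ha, hb⟩
        refine ⟨by omega, ?_⟩
        rw [if_neg (by omega), if_neg (by omega), if_pos hb]
    rw [he, Nat.card_Icc, if_neg h0, if_neg h1, if_pos rfl]
    omega
  rcases eq_or_ne k 3 with rfl | h3
  · have he : ((Finset.range (2*m+1)).filter
        (fun i => (if i = 0 then 1 else if i = 2*m then 0 else if i ≤ m then 2 else 3) = 3))
        = Finset.Icc (m+1) (2*m-1) := by
      ext i
      simp only [mem_filter, mem_range, Finset.mem_Icc]
      constructor
      · rintro ⟨hi, hp⟩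
        split_ifs at hp <;> omega
      · rintro ⟨ha, hb⟩
        refine ⟨by omega, ?_⟩
        rw [if_neg (by omega), if_neg (by omega), if_neg (by omega)]
    rw [he, Nat.card_Icc, if_neg h0, if_neg h1, if_neg h2, if_pos rfl]
    omega
  · have he : ((Finset.range (2*m+1)).filter
        (fun i => (if i = 0 then 1 else if i = 2*m then 0 else if i ≤ m then 2 else 3) = k)) = ∅ := by
      rw [Finset.filter_eq_empty_iff]
      intro i _
      split_ifs <;> omega
    rw [he, Finset.card_empty, if_neg h0, if_neg h1, if_neg h2, if_neg h3]

private lemma helm_colorable4 {n : ℕ} (hn : 3 ≤ n) : (helmGraph n).Colorable 4 :=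
  ⟨SimpleGraph.Coloring.mk (fun v => ⟨col n v, col_lt n v⟩)
    (fun {u v} hadj h => col_proper hn u v hadj (congrArg Fin.val h))⟩

private lemma fin3_aux1 : ∀ a b z : Fin 3, a ≠ b → z ≠ a → z ≠ b → z = -(a + b) := by decide

private lemma fin3_aux2 : ∀ a b z : Fin 3, a ≠ b → z ≠ a → z ≠ -(a + b) → z = b := by decide

private lemma helm_not_colorable3 {n : ℕ} (hn : 3 ≤ n) (hodd : Odd n) :
    ¬ (helmGraph n).Colorable 3 := by
  rintro ⟨C⟩
  set a : Fin 3 := C (Sum.inl none) with ha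
  set g : Fin n → Fin 3 := fun i => C (Sum.inl (some i)) with hg
  have hga : ∀ i : Fin n, g i ≠ a := by
    intro i h
    exact C.valid (show (helmGraph n).Adj (Sum.inl (some i)) (Sum.inl none) from trivial) h
  have hadjg : ∀ i j : Fin n, (cycleGraph n).Adj i j → g i ≠ g j := by
    intro i j hadj h
    exact C.valid (show (helmGraph n).Adj (Sum.inl (some i)) (Sum.inl (some j)) from hadj) h
  have h0 : (0 : ℕ) < n := by omega
  set b : Fin 3 := g ⟨0, h0⟩ with hb
  have hab : a ≠ b := (hga ⟨0, h0⟩).symm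
  have key : ∀ j : ℕ, (h : j < n) → g ⟨j, h⟩ = if j % 2 = 0 then b else -(a + b) := by
    intro j
    induction j with
    | zero => intro h; simp [hb]
    | succ j ih =>
      intro h
      have hj : j < n := by omega
      have hadj : (cycleGraph n).Adj ⟨j, hj⟩ ⟨j+1, h⟩ := by
        rw [cycle_adj hn]
        left; rfl
      have hne := hadjg _ _ hadj
      have hnea := hga ⟨j+1, h⟩
      by_cases hpar : j % 2 = 0
      · rw [if_pos hpar] at ih
        rw [if_neg (by omega)]
        exact fin3_aux1 a b _ hab hnea (by rw [← ih hj]; exact (Ne.symm hne))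
      · rw [if_neg hpar] at ih
        rw [if_pos (by omega)]
        exact fin3_aux2 a b _ hab hnea (by rw [← ih hj]; exact (Ne.symm hne))
  have hn1 : n - 1 < n := by omega
  have hlast : g ⟨n - 1, hn1⟩ = b := by
    rw [key (n - 1) hn1, if_pos (by obtain ⟨t, rfl⟩ := hodd; omega)]
  have hadj : (cycleGraph n).Adj ⟨n - 1, hn1⟩ ⟨0, h0⟩ := by
    rw [cycle_adj hn]
    right; right; right; exact ⟨rfl, rfl⟩
  exact hadjg _ _ hadj (by rw [hlast, hb])

private lemma helm_chromaticNumber {n : ℕ} (hn : 3 ≤ n) (hodd : Odd n) :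
    (helmGraph n).chromaticNumber = 4 := by
  refine le_antisymm ?_ ?_
  · have := (helm_colorable4 hn).chromaticNumber_le
    simpa using this
  · by_contra h
    push_neg at h
    have h3 : (helmGraph n).chromaticNumber ≤ 3 := by
      have : (4 : ℕ∞) = 3 + 1 := by norm_num
      rw [this] at h
      exact Order.le_of_lt_add_one h
    have : (helmGraph n).Colorable 3 := by
      rw [← SimpleGraph.chromaticNumber_le_iff_colorable]
      simpa using h3
    exact helm_not_colorable3 hn hodd this

open Finset in
private lemma image_card_eq_range_ncard {V : Type*} [Fintype V] [DecidableEq V] (c : V → ℕ) :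
    #(Finset.univ.image c) = (Set.range c).ncard := by
  rw [← Set.image_univ, ← Finset.coe_univ, ← Finset.coe_image, Set.ncard_coe_finset]

private lemma range_col_ncard {n : ℕ} (hn : 3 ≤ n) : (Set.range (col n)).ncard = 4 := by
  rw [col_range hn, show ({0, 1, 2, 3} : Set ℕ) = (↑({0, 1, 2, 3} : Finset ℕ) : Set ℕ) by simp,
    Set.ncard_coe_finset]
  decide

open Finset in
private lemma card_V {n : ℕ} : Fintype.card (Option (Fin n) ⊕ Fin n) = 2 * n + 1 := by
  simp [Fintype.card_sum, Fintype.card_option, Fintype.card_fin]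
  omega

open Finset in
theorem zeta_helm_odd' (n : ℕ) (hn : 3 ≤ n) (hodd : Odd n) :
    zeta (helmGraph n) = 3 * n * (n - 1) / 2 := by
  classical
  obtain ⟨m, hm⟩ : ∃ m, n = 2 * m + 1 := by
    obtain ⟨t, ht⟩ := hodd; exact ⟨t, by omega⟩
  have hm1 : 1 ≤ m := by omega
  subst hm
  set n := 2 * m + 1 with hn'
  -- target value
  have htarget : 3 * n * (n - 1) / 2 = 6 * m ^ 2 + 3 * m := by
    rw [show 3 * n * (n - 1) = (6 * m ^ 2 + 3 * m) * 2 by rw [hn', Nat.add_sub_cancel]; ring, Nat.mul_div_cancel _ (by omega)]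
  rw [htarget]
  -- the choose-2 value
  have hchoose : (Fintype.card (Option (Fin n) ⊕ Fin n)).choose 2 = 8 * m ^ 2 + 10 * m + 3 := by
    rw [card_V, Nat.choose_two_right,
      show (2 * n + 1) * (2 * n + 1 - 1) = (8 * m ^ 2 + 10 * m + 3) * 2 by rw [hn', Nat.add_sub_cancel]; ring,
      Nat.mul_div_cancel _ (by omega)]
  -- fiber sums for an arbitrary proper colouring with exactly four colours
  have key_bound : ∀ c : Option (Fin n) ⊕ Fin n → ℕ, IsChromaticColoring (helmGraph n) c →
      (completionEdges (helmGraph n) c).ncard ≤ 6 * m ^ 2 + 3 * m := by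
    intro c ⟨hc, hrange⟩
    have hr4 : (Set.range c).ncard = 4 := by
      rw [helm_chromaticNumber hn hodd] at hrange
      exact_mod_cast hrange
    have himg4 : #(Finset.univ.image c) = 4 := by rw [image_card_eq_range_ncard, hr4]
    have hmaster := master (helmGraph n) c hc
    rw [helm_edge_count hn, hchoose] at hmaster
    have hfour := four_color_bound c himg4
    rw [card_V] at hfour
    set S := (sameGraph c).edgeSet.ncard
    set x := (completionEdges (helmGraph n) c).ncard
    have hsq : (2 * n + 1) ^ 2 = 16 * m ^ 2 + 24 * m + 9 := by rw [hn']; ring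
    rw [hsq] at hfour
    have hSge : 2 * m ^ 2 + m ≤ S := by
      by_contra hlt
      push_neg at hlt
      have : S + 1 ≤ 2 * m ^ 2 + m := hlt
      have hn3 : (2 * n + 1) = 4 * m + 3 := by omega
      rw [hn3] at hfour
      nlinarith
    have hn3 : 3 * n = 6 * m + 3 := by omega
    rw [hn3] at hmaster
    linarith
  -- the optimal colouring
  have hcc : IsChromaticColoring (helmGraph n) (col n) := by
    refine ⟨col_proper hn, ?_⟩
    rw [helm_chromaticNumber hn hodd, range_col_ncard hn]
    rfl
  have himg : Finset.univ.image (col n) = ({0, 1, 2, 3} : Finset ℕ) := by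
    ext k
    have h := Set.ext_iff.mp (col_range hn) k
    simp only [Set.mem_range, Set.mem_insert_iff, Set.mem_singleton_iff] at h
    simp only [Finset.mem_image, Finset.mem_univ, true_and, Finset.mem_insert,
      Finset.mem_singleton]
    exact h
  -- fiber sizes
  have hsimp : n - 1 = 2 * m := by omega
  have hdiv : n / 2 = m := by omega
  have hfib : ∀ k : ℕ,
      #(Finset.univ.filter (fun v => col n v = k))
        = (if (3 : ℕ) = k then 1 else 0)
          + #((Finset.range (2*m+1)).filter (fun i => (if i = 2*m then 2 else i % 2) = k))
          + #((Finset.range (2*m+1)).filter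
              (fun i => (if i = 0 then 1 else if i = 2*m then 0 else if i ≤ m then 2 else 3) = k)) := by
    intro k
    have := fiber_card (n := n) k
    rw [hsimp, hdiv, hn'] at this
    exact this
  have hf0 : #(Finset.univ.filter (fun v => col n v = 0)) = m + 1 := by
    rw [hfib 0, rim_count_even m, pend_count m hm1 0]
    norm_num
  have hf1 : #(Finset.univ.filter (fun v => col n v = 1)) = m + 1 := by
    rw [hfib 1, rim_count_odd m, pend_count m hm1 1]
    norm_num
  have hf2 : #(Finset.univ.filter (fun v => col n v = 2)) = m + 1 := by
    rw [hfib 2, rim_count_two m, pend_count m hm1 2]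
    norm_num
    omega
  have hf3 : #(Finset.univ.filter (fun v => col n v = 3)) = m := by
    rw [hfib 3, rim_count_three m, pend_count m hm1 3]
    norm_num
    omega
  -- the same-colour count for col
  have hsame := same_count (col n)
  rw [himg, card_V] at hsame
  rw [show ({0, 1, 2, 3} : Finset ℕ) = insert 0 (insert 1 (insert 2 ({3} : Finset ℕ))) from rfl,
    Finset.sum_insert (by decide), Finset.sum_insert (by decide), Finset.sum_insert (by decide),
    Finset.sum_singleton, hf0, hf1, hf2, hf3] at hsame
  have hSval : (sameGraph (col n)).edgeSet.ncard = 2 * m ^ 2 + m := by nlinarith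
  -- the completion count for col
  have hmaster := master (helmGraph n) (col n) (col_proper hn)
  rw [helm_edge_count hn, hchoose, hSval, show 3 * n = 6 * m + 3 by omega] at hmaster
  have hval : (completionEdges (helmGraph n) (col n)).ncard = 6 * m ^ 2 + 3 * m := by nlinarith
  -- conclude
  have hmem : (6 * m ^ 2 + 3 * m) ∈
      {k | ∃ c, IsChromaticColoring (helmGraph n) c ∧ k = (completionEdges (helmGraph n) c).ncard} :=
    ⟨col n, hcc, hval.symm⟩
  have hbdd : ∀ k ∈
      {k | ∃ c, IsChromaticColoring (helmGraph n) c ∧ k = (completionEdges (helmGraph n) c).ncard},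
      k ≤ 6 * m ^ 2 + 3 * m := by
    rintro k ⟨c, hc, rfl⟩
    exact key_bound c hc
  exact le_antisymm (csSup_le ⟨_, hmem⟩ hbdd) (le_csSup ⟨_, hbdd⟩ hmem)

/-- For odd `n ≥ 3`, `ζ(H_{1,n}) = 3n(n-1)/2` (in particular `ζ(H_{1,3}) = 9`). -/
theorem zeta_helm_odd (n : ℕ) (hn : 3 ≤ n) (hodd : Odd n) :
    zeta (helmGraph n) = 3 * n * (n - 1) / 2 := by
  exact zeta_helm_odd' n hn hodd
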